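/- Fix p, q ∈ ℤ⁺ and s ∈ ℝ with 2s ∉ ℤ. With φ̃_n(s;p,q) as in the telescoping lemma (namely φ̃_n = φ_n · [(4n+3)(1+s-2p)(q-n)(1+2s+2n-2q) + (4n+1)(s-2q)(1+2p+2n)(s-p-n)] / [(s-p)(1+2p)(s-q)(1+2q)], where φ_n = (s+3/2-p)_n(1-p)_n(s+1/2-q)_n(-q)_n / [(p-s+1)_n(p+3/2)_n(q-s+1)_n(q+3/2)_n]), one has ∑_{n=0}^{p-1} φ̃_n(s;p,q) = 1. -/

import Mathlib

/-- The rising factorial (Pochhammer symbol) `(x)_n = x (x+1) ⋯ (x+n-1)`. -/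
noncomputable def risingFactorial (x : ℝ) (n : ℕ) : ℝ :=
  ∏ k ∈ Finset.range n, (x + k)

/-- `φ_n(s;p,q)`. -/
noncomputable def varphi (s : ℝ) (p q : ℕ) (n : ℕ) : ℝ :=
  (risingFactorial (s + 3 / 2 - p) n * risingFactorial (1 - p) n *
      risingFactorial (s + 1 / 2 - q) n * risingFactorial (-q) n) /
    (risingFactorial ((p : ℝ) - s + 1) n * risingFactorial ((p : ℝ) + 3 / 2) n *
      risingFactorial ((q : ℝ) - s + 1) n * risingFactorial ((q : ℝ) + 3 / 2) n)

/-- `Φ_n(s;p,q)`. -/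
noncomputable def Phi (s : ℝ) (p q : ℕ) (n : ℕ) : ℝ :=
  (((n : ℝ) + p - s) * (1 + 2 * p + 2 * n) * ((n : ℝ) + q - s) * (1 + 2 * q + 2 * n) /
      ((s - p) * (1 + 2 * p) * (s - q) * (1 + 2 * q))) * varphi s p q n

/-- `φ̃_n(s;p,q)` (denoted `ϕ_n` in the paper). -/
noncomputable def phiT (s : ℝ) (p q : ℕ) (n : ℕ) : ℝ :=
  varphi s p q n *
    ((4 * (n : ℝ) + 3) * (1 + s - 2 * p) * ((q : ℝ) - n) * (1 + 2 * s + 2 * n - 2 * q) +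
      (4 * (n : ℝ) + 1) * (s - 2 * q) * (1 + 2 * p + 2 * n) * (s - p - n)) /
    ((s - p) * (1 + 2 * p) * (s - q) * (1 + 2 * q))

lemma rF_succ (x : ℝ) (n : ℕ) :
    risingFactorial x (n + 1) = risingFactorial x n * (x + n) :=
  Finset.prod_range_succ _ n

lemma varphi_succ (p q : ℕ) (s : ℝ) (n : ℕ) :
    varphi s p q (n + 1) = varphi s p q n *
      (((s + 3 / 2 - p + n) * (1 - p + n) * (s + 1 / 2 - q + n) * (-(q : ℝ) + n)) /
      (((p : ℝ) - s + 1 + n) * ((p : ℝ) + 3 / 2 + n) * ((q : ℝ) - s + 1 + n) *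
        ((q : ℝ) + 3 / 2 + n))) := by
  rw [varphi, varphi, div_mul_div_comm]
  congr 1 <;> simp only [rF_succ] <;> ring

lemma nonint (p q : ℕ) (s : ℝ) (hs : ∀ m : ℤ, 2 * s ≠ (m : ℝ)) :
    ∀ m : ℤ, s ≠ (m : ℝ) := fun m h => hs (2 * m) (by push_cast; linarith)

lemma helper (V T P1 P2 xs ys D : ℝ) (hys : ys ≠ 0) (hD : D ≠ 0)
    (h1 : P2 = 4 * ys) (h2 : T = P1 - 4 * xs) :
    V * T / D = P1 / D * V - P2 / D * (V * (xs / ys)) := by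
  subst h1 h2
  field_simp

lemma telescope (p q : ℕ) (s : ℝ) (hs : ∀ m : ℤ, 2 * s ≠ (m : ℝ)) (n : ℕ) :
    phiT s p q n = Phi s p q n - Phi s p q (n + 1) := by
  have hsZ := nonint p q s hs
  have e1 : (p : ℝ) - s + 1 + n ≠ 0 := fun h =>
    hsZ ((p : ℤ) + 1 + n) (by push_cast; linarith)
  have e2 : (p : ℝ) + 3 / 2 + n ≠ 0 := by positivity
  have e3 : (q : ℝ) - s + 1 + n ≠ 0 := fun h =>
    hsZ ((q : ℤ) + 1 + n) (by push_cast; linarith)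
  have e4 : (q : ℝ) + 3 / 2 + n ≠ 0 := by positivity
  have hsp : s - p ≠ 0 := fun h => hsZ p (by push_cast at h ⊢; linarith)
  have hsq : s - q ≠ 0 := fun h => hsZ q (by push_cast at h ⊢; linarith)
  have hp1 : (1 : ℝ) + 2 * p ≠ 0 := by positivity
  have hq1 : (1 : ℝ) + 2 * q ≠ 0 := by positivity
  have hys := mul_ne_zero (mul_ne_zero (mul_ne_zero e1 e2) e3) e4
  have hD := mul_ne_zero (mul_ne_zero (mul_ne_zero hsp hp1) hsq) hq1
  rw [phiT, Phi, Phi, varphi_succ]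
  push_cast
  generalize varphi s p q n = V
  exact helper _ _ _ _ _ _ _ hys hD (by ring) (by ring)

lemma Phi_zero (p q : ℕ) (s : ℝ) (hs : ∀ m : ℤ, 2 * s ≠ (m : ℝ)) :
    Phi s p q 0 = 1 := by
  have hsZ := nonint p q s hs
  have hsp : s - p ≠ 0 := fun h => hsZ p (by push_cast at h ⊢; linarith)
  have hsq : s - q ≠ 0 := fun h => hsZ q (by push_cast at h ⊢; linarith)
  have hp1 : (1 : ℝ) + 2 * p ≠ 0 := by positivity
  have hq1 : (1 : ℝ) + 2 * q ≠ 0 := by positivity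
  have hD : (s - p) * (1 + 2 * p) * (s - q) * (1 + 2 * q) ≠ 0 :=
    mul_ne_zero (mul_ne_zero (mul_ne_zero hsp hp1) hsq) hq1
  simp only [Phi, varphi, risingFactorial, Finset.range_zero, Finset.prod_empty,
    Nat.cast_zero, mul_one, one_mul, div_one, mul_zero, add_zero]
  rw [div_eq_one_iff_eq hD]
  ring

lemma Phi_p (p q : ℕ) (hp : 0 < p) (s : ℝ) : Phi s p q p = 0 := by
  have : risingFactorial (1 - (p : ℝ)) p = 0 := by
    apply Finset.prod_eq_zero (Finset.mem_range.mpr (Nat.sub_lt hp one_pos))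
    have : ((p - 1 : ℕ) : ℝ) = (p : ℝ) - 1 := by
      push_cast [Nat.cast_sub hp]; ring
    rw [this]; ring
  simp [Phi, varphi, this]

/-- Lemma 5.7: `∑_{n=0}^{p-1} φ̃_n(s;p,q) = 1`. -/
theorem sum_phiT_eq_one (p q : ℕ) (hp : 0 < p) (hq : 0 < q)
    (s : ℝ) (hs : ∀ m : ℤ, 2 * s ≠ (m : ℝ)) :
    ∑ n ∈ Finset.range p, phiT s p q n = 1 := by
  have : ∑ n ∈ Finset.range p, phiT s p q n
      = ∑ n ∈ Finset.range p, (Phi s p q n - Phi s p q (n + 1)) :=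
    Finset.sum_congr rfl fun n _ => telescope p q s hs n
  rw [this, Finset.sum_range_sub' (Phi s p q) p, Phi_zero p q s hs, Phi_p p q hp s, sub_zero]
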